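/- Let G be a graph on vertices {v_1,...,v_n}, and let D be an orientation of G in which v_i has out-degree d_i. Then the coefficient of ∏_{i=1}^n x_i^{d_i} in the graph polynomial P_G(x_1,...,x_n) = ∏_{(i,j)∈E, i<j}(x_i − x_j) is nonzero if and only if the number of spanning eulerian subdigraphs of D with an even number of arcs differs from the number with an odd number of arcs. -/

import Mathlib

open MvPolynomial Finset

/-- The graph polynomial `P_G = ∏_{(i,j) ∈ E, i < j} (xᵢ - xⱼ)`. -/
noncomputable def graphPoly {V : Type} [Fintype V] [LinearOrder V] (G : SimpleGraph V)
    [DecidableRel G.Adj] : MvPolynomial V ℝ :=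
  ∏ p ∈ Finset.univ.filter (fun p : V × V => p.1 < p.2 ∧ G.Adj p.1 p.2), (X p.1 - X p.2)

/-- `G` is Alon–Tarsi `k`-choosable: `P_G` has a monomial with non-zero coefficient all of whose
exponents are at most `k - 1`. -/
def IsAT {V : Type} [Fintype V] [LinearOrder V] (G : SimpleGraph V) [DecidableRel G.Adj]
    (k : ℕ) : Prop :=
  ∃ t : V →₀ ℕ, (graphPoly G).coeff t ≠ 0 ∧ ∀ i, t i + 1 ≤ k

/-- The Alon–Tarsi number of `G`: the least `k` such that `G` is Alon–Tarsi `k`-choosable. -/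
noncomputable def ATnum {V : Type} [Fintype V] [LinearOrder V] (G : SimpleGraph V)
    [DecidableRel G.Adj] : ℕ :=
  sInf {k | IsAT G k}

/-- Out-degree of `v` in a set `A` of arcs. -/
def outdeg {n : ℕ} (A : Finset (Fin n × Fin n)) (v : Fin n) : ℕ :=
  (A.filter fun e => e.1 = v).card

/-- In-degree of `v` in a set `A` of arcs. -/
def indeg {n : ℕ} (A : Finset (Fin n × Fin n)) (v : Fin n) : ℕ :=
  (A.filter fun e => e.2 = v).card

lemma prod_monomial_single {V : Type} [Fintype V] {α : Type*} [DecidableEq α]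
    (s : Finset α) (f : α → V) (c : ℝ) :
    (∏ e ∈ s, (monomial (Finsupp.single (f e) 1) c : MvPolynomial V ℝ)) =
      monomial (∑ e ∈ s, Finsupp.single (f e) 1) (c ^ s.card) := by
  induction s using Finset.cons_induction with
  | empty => simp
  | cons a s ha ih =>
      rw [Finset.prod_cons, ih, monomial_mul, Finset.sum_cons, Finset.card_cons, pow_succ']

lemma sum_single_apply {V : Type} [Fintype V] [DecidableEq V] {α : Type*}
    (s : Finset α) (f : α → V) (v : V) :
    (∑ e ∈ s, Finsupp.single (f e) (1 : ℕ)) v = (s.filter fun e => f e = v).card := by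
  rw [Finset.card_filter, Finsupp.finset_sum_apply]
  simp [Finsupp.single_apply]


lemma orient (n : ℕ) (G : SimpleGraph (Fin n)) [DecidableRel G.Adj]
    (D : Finset (Fin n × Fin n))
    (hD1 : ∀ e ∈ D, G.Adj e.1 e.2)
    (hD2 : ∀ i j, G.Adj i j → ((i, j) ∈ D ∨ (j, i) ∈ D))
    (hD3 : ∀ i j, (i, j) ∈ D → (j, i) ∉ D) :
    (∏ p ∈ Finset.univ.filter (fun p : Fin n × Fin n => p.1 < p.2 ∧ G.Adj p.1 p.2),
      ((X p.1 - X p.2) : MvPolynomial (Fin n) ℝ)) =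
      (-1) ^ (D.filter fun e => e.2 < e.1).card * ∏ e ∈ D, (X e.1 - X e.2) := by
  classical
  set D1 := D.filter fun e => e.1 < e.2 with hD1def
  set D2 := D.filter fun e => e.2 < e.1 with hD2def
  have hne : ∀ e ∈ D, e.1 ≠ e.2 := fun e he => (hD1 e he).ne
  have hsplit : D = D1 ∪ D2 := by
    rw [hD1def, hD2def]
    ext e
    simp only [mem_union, mem_filter]
    constructor
    · intro he
      rcases lt_or_gt_of_ne (hne e he) with h | h
      · exact Or.inl ⟨he, h⟩
      · exact Or.inr ⟨he, h⟩
    · rintro (⟨h, _⟩ | ⟨h, _⟩) <;> exact h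
  have hdisj : Disjoint D1 D2 := by
    rw [Finset.disjoint_left]
    rintro e he1 he2
    rw [hD1def, mem_filter] at he1
    rw [hD2def, mem_filter] at he2
    exact absurd he1.2 (not_lt.mpr he2.2.le)
  have hE : Finset.univ.filter (fun p : Fin n × Fin n => p.1 < p.2 ∧ G.Adj p.1 p.2) =
      D1 ∪ D2.image Prod.swap := by
    ext p
    simp only [mem_union, mem_filter, mem_univ, true_and, Finset.mem_image, hD1def, hD2def]
    constructor
    · rintro ⟨hlt, hadj⟩
      rcases hD2 p.1 p.2 hadj with h | h
      · left; exact ⟨by simpa using h, hlt⟩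
      · right; exact ⟨(p.2, p.1), ⟨h, hlt⟩, rfl⟩
    · rintro (⟨hmem, hlt⟩ | ⟨e, ⟨he, hlt⟩, rfl⟩)
      · exact ⟨hlt, hD1 p hmem⟩
      · exact ⟨hlt, (hD1 e he).symm⟩
  have hdisj2 : Disjoint D1 (D2.image Prod.swap) := by
    rw [Finset.disjoint_left]
    rintro p hp1 hp2
    rw [hD1def, mem_filter] at hp1
    rw [hD2def] at hp2
    simp only [Finset.mem_image, mem_filter] at hp2
    obtain ⟨e, ⟨he, _⟩, rfl⟩ := hp2
    exact hD3 e.1 e.2 he hp1.1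
  rw [hE, Finset.prod_union hdisj2,
    Finset.prod_image (by intro a _ b _ h; exact Prod.swap_injective h)]
  have : ∀ e ∈ D2, ((X (Prod.swap e).1 - X (Prod.swap e).2) : MvPolynomial (Fin n) ℝ) =
      (-1) * (X e.1 - X e.2) := by
    intro e _; simp [Prod.swap]
  rw [Finset.prod_congr rfl this, Finset.prod_mul_distrib, Finset.prod_const]
  rw [hsplit, Finset.prod_union hdisj]
  ring

lemma alon_tarsi_aux (n : ℕ) (G : SimpleGraph (Fin n)) [DecidableRel G.Adj]
    (D : Finset (Fin n × Fin n))
    (hD1 : ∀ e ∈ D, G.Adj e.1 e.2)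
    (d : Fin n → ℕ) (hd : ∀ v, outdeg D v = d v) :
    (∏ e ∈ D, ((X e.1 - X e.2) : MvPolynomial (Fin n) ℝ)).coeff
        (Finsupp.equivFunOnFinite.symm d) =
      ((D.powerset.filter fun A => (∀ v, outdeg A v = indeg A v) ∧ Even A.card).card : ℝ) -
        (D.powerset.filter fun A => (∀ v, outdeg A v = indeg A v) ∧ Odd A.card).card := by
  classical
  have hX : ∀ e : Fin n × Fin n, ((X e.1 - X e.2) : MvPolynomial (Fin n) ℝ) =
      monomial (Finsupp.single e.1 1) (1 : ℝ) + monomial (Finsupp.single e.2 1) (-1 : ℝ) := by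
    intro e
    have h2 : (monomial (Finsupp.single e.2 1) (-1 : ℝ) : MvPolynomial (Fin n) ℝ) =
        -(monomial (Finsupp.single e.2 1) (1:ℝ)) := map_neg _ 1
    rw [sub_eq_add_neg, h2]
    rfl
  rw [Finset.prod_congr rfl (fun e _ => hX e), Finset.prod_add]
  have hterm : ∀ A ∈ D.powerset,
      ((∏ e ∈ A, (monomial (Finsupp.single e.1 1) (1:ℝ) : MvPolynomial (Fin n) ℝ)) *
        ∏ e ∈ D \ A, (monomial (Finsupp.single e.2 1) (-1:ℝ) : MvPolynomial (Fin n) ℝ)) =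
      monomial (∑ e ∈ A, Finsupp.single e.1 1 + ∑ e ∈ D \ A, Finsupp.single e.2 1)
        ((-1:ℝ) ^ (D \ A).card) := by
    intro A _
    rw [prod_monomial_single, prod_monomial_single, monomial_mul, one_pow, one_mul]
  rw [Finset.sum_congr rfl hterm, coeff_sum]
  -- each coefficient
  have hcoeff : ∀ A ∈ D.powerset,
      (coeff (Finsupp.equivFunOnFinite.symm d)
        (monomial (∑ e ∈ A, Finsupp.single e.1 1 + ∑ e ∈ D \ A, Finsupp.single e.2 1)
          ((-1:ℝ) ^ (D \ A).card))) =
      if (∀ v, outdeg (D \ A) v = indeg (D \ A) v) then (-1:ℝ) ^ (D \ A).card else 0 := by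
    intro A hA
    rw [mem_powerset] at hA
    rw [coeff_monomial]
    congr 1
    rw [eq_iff_iff]
    rw [Finsupp.ext_iff]
    have key : ∀ v, ((∑ e ∈ A, Finsupp.single e.1 1 + ∑ e ∈ D \ A, Finsupp.single e.2 1 :
        (Fin n) →₀ ℕ)) v = outdeg A v + indeg (D \ A) v := by
      intro v
      rw [Finsupp.add_apply, sum_single_apply, sum_single_apply]
      rfl
    constructor
    · intro h v
      have h1 := h v
      rw [key v, Finsupp.coe_equivFunOnFinite_symm, ← hd v] at h1
      have hsplit : outdeg D v = outdeg A v + outdeg (D \ A) v := by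
        unfold outdeg
        rw [← Finset.card_union_of_disjoint (Finset.disjoint_filter_filter
          (Finset.disjoint_sdiff)), ← Finset.filter_union, Finset.union_sdiff_of_subset hA]
      rw [hsplit] at h1
      exact (Nat.add_left_cancel h1).symm
    · intro h v
      rw [key v, Finsupp.coe_equivFunOnFinite_symm, ← hd v, ← h v]
      unfold outdeg
      rw [← Finset.card_union_of_disjoint (Finset.disjoint_filter_filter
          (Finset.disjoint_sdiff)), ← Finset.filter_union, Finset.union_sdiff_of_subset hA]
  rw [Finset.sum_congr rfl hcoeff]
  -- reindex A ↦ D \ A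
  have hre : (∑ A ∈ D.powerset,
      if ∀ v, outdeg (D \ A) v = indeg (D \ A) v then ((-1:ℝ)) ^ (D \ A).card else 0) =
      ∑ B ∈ D.powerset, if ∀ v, outdeg B v = indeg B v then ((-1:ℝ)) ^ B.card else 0 := by
    refine Finset.sum_nbij' (fun A => D \ A) (fun B => D \ B) ?_ ?_ ?_ ?_ ?_
    · intro A hA; simp_all [mem_powerset]
    · intro B hB; simp_all [mem_powerset]
    · intro A hA; rw [mem_powerset] at hA; exact Finset.sdiff_sdiff_eq_self hA
    · intro B hB; rw [mem_powerset] at hB; exact Finset.sdiff_sdiff_eq_self hB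
    · intro A hA; rfl
  rw [hre]
  -- now sum over B of if eulerian then (-1)^|B| else 0
  rw [Finset.sum_ite, Finset.sum_const_zero, add_zero]
  rw [← Finset.sum_filter_add_sum_filter_not
    (D.powerset.filter fun B => ∀ v, outdeg B v = indeg B v) (fun B => Even B.card)]
  have he : ∀ B ∈ (D.powerset.filter fun B => ∀ v, outdeg B v = indeg B v).filter
      (fun B => Even B.card), ((-1:ℝ)) ^ B.card = 1 := by
    intro B hB
    rw [mem_filter] at hB
    exact Even.neg_one_pow hB.2
  have ho : ∀ B ∈ (D.powerset.filter fun B => ∀ v, outdeg B v = indeg B v).filter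
      (fun B => ¬ Even B.card), ((-1:ℝ)) ^ B.card = -1 := by
    intro B hB
    rw [mem_filter] at hB
    exact Odd.neg_one_pow (Nat.not_even_iff_odd.mp hB.2)
  rw [Finset.sum_congr rfl he, Finset.sum_congr rfl ho, Finset.sum_const, Finset.sum_const]
  have h1 : (filter (fun B => ¬Even B.card)
      (filter (fun B => ∀ v, outdeg B v = indeg B v) D.powerset)) =
      D.powerset.filter (fun A => (∀ v, outdeg A v = indeg A v) ∧ Odd A.card) := by
    rw [Finset.filter_filter]
    apply Finset.filter_congr
    intro B _
    simp [Nat.not_even_iff_odd]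
  have h2 : (filter (fun B => Even B.card)
      (filter (fun B => ∀ v, outdeg B v = indeg B v) D.powerset)) =
      D.powerset.filter (fun A => (∀ v, outdeg A v = indeg A v) ∧ Even A.card) := by
    rw [Finset.filter_filter]
  rw [h1, h2]
  simp only [nsmul_eq_mul, mul_one, mul_neg_one]
  ring

/-- **The Alon–Tarsi theorem.** Let `D` be an orientation of `G` with out-degrees `d`.  The
coefficient of `∏ xᵢ^{dᵢ}` in `P_G` is non-zero iff the number of spanning eulerian subdigraphs
of `D` with an even number of arcs differs from the number with an odd number of arcs. -/
theorem alon_tarsi (n : ℕ) (G : SimpleGraph (Fin n)) [DecidableRel G.Adj]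
    (D : Finset (Fin n × Fin n))
    (hD1 : ∀ e ∈ D, G.Adj e.1 e.2)
    (hD2 : ∀ i j, G.Adj i j → ((i, j) ∈ D ∨ (j, i) ∈ D))
    (hD3 : ∀ i j, (i, j) ∈ D → (j, i) ∉ D)
    (d : Fin n → ℕ) (hd : ∀ v, outdeg D v = d v) :
    (graphPoly G).coeff (Finsupp.equivFunOnFinite.symm d) ≠ 0 ↔
      (D.powerset.filter fun A => (∀ v, outdeg A v = indeg A v) ∧ Even A.card).card ≠
        (D.powerset.filter fun A => (∀ v, outdeg A v = indeg A v) ∧ Odd A.card).card := by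
  classical
  have horient := orient n G D hD1 hD2 hD3
  have hmain := alon_tarsi_aux n G D hD1 d hd
  unfold graphPoly
  rw [horient]
  have hC : ((-1 : MvPolynomial (Fin n) ℝ)) ^ (D.filter fun e => e.2 < e.1).card =
      C ((-1 : ℝ) ^ (D.filter fun e => e.2 < e.1).card) := by
    rw [map_pow, map_neg, map_one]
  rw [hC, coeff_C_mul, hmain]
  have hpow : ((-1 : ℝ)) ^ (D.filter fun e => e.2 < e.1).card ≠ 0 :=
    pow_ne_zero _ (by norm_num)
  rw [mul_ne_zero_iff, sub_ne_zero]
  simp [hpow, Nat.cast_inj]
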